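/- Let M and N be n×n Hermitian positive semidefinite matrices with M - N positive semidefinite. Then 0 ≤ log det(I + M) - log det(I + N) ≤ log det(I + M - N). -/

import Mathlib

open Matrix ComplexOrder


variable {n : ℕ}

lemma det_one_add_eq {P : Matrix (Fin n) (Fin n) ℂ} (hP : P.PosSemidef) :
    (1 + P).det = ((∏ i, (1 + hP.1.eigenvalues i) : ℝ) : ℂ) := by
  have hU : (hP.1.eigenvectorUnitary : Matrix (Fin n) (Fin n) ℂ) *
      star (hP.1.eigenvectorUnitary : Matrix (Fin n) (Fin n) ℂ) = 1 :=
    (Matrix.mem_unitaryGroup_iff).mp (hP.1.eigenvectorUnitary).2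
  conv_lhs => rw [hP.1.spectral_theorem, Unitary.conjStarAlgAut_apply]
  rw [show (1 : Matrix (Fin n) (Fin n) ℂ) +
      (hP.1.eigenvectorUnitary : Matrix (Fin n) (Fin n) ℂ) *
        diagonal (RCLike.ofReal ∘ hP.1.eigenvalues) *
        star (hP.1.eigenvectorUnitary : Matrix (Fin n) (Fin n) ℂ) =
      (hP.1.eigenvectorUnitary : Matrix (Fin n) (Fin n) ℂ) *
        (1 + diagonal (RCLike.ofReal ∘ hP.1.eigenvalues)) *
        star (hP.1.eigenvectorUnitary : Matrix (Fin n) (Fin n) ℂ) from by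
    rw [Matrix.mul_add, Matrix.add_mul, Matrix.mul_one, hU]]
  rw [det_mul_right_comm, hU, Matrix.one_mul, show (1 : Matrix (Fin n) (Fin n) ℂ) = diagonal (fun _ => 1) from (Matrix.diagonal_one).symm, Matrix.diagonal_add,
    det_diagonal]
  push_cast
  simp [Pi.add_apply]

lemma aux_one_le {P : Matrix (Fin n) (Fin n) ℂ} (hP : P.PosSemidef) :
    (1 : ℂ) ≤ (1 + P).det := by
  rw [det_one_add_eq hP]
  have h : ∀ i ∈ Finset.univ, (1 : ℝ) ≤ 1 + hP.1.eigenvalues i := fun i _ => by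
    have := hP.eigenvalues_nonneg i; linarith
  have : (1 : ℝ) ≤ ∏ i, (1 + hP.1.eigenvalues i) := by
    calc (1 : ℝ) = ∏ _i : Fin n, (1 : ℝ) := by simp
    _ ≤ ∏ i, (1 + hP.1.eigenvalues i) :=
      Finset.prod_le_prod (fun i _ => zero_le_one) h
  exact_mod_cast this

lemma aux_pos {P : Matrix (Fin n) (Fin n) ℂ} (hP : P.PosSemidef) :
    (0 : ℂ) < (1 + P).det :=
  (Matrix.PosDef.one.add_posSemidef hP).det_pos

open scoped MatrixOrder in
lemma aux_mono {P G : Matrix (Fin n) (Fin n) ℂ} (hP : P.PosSemidef) (hG : G.PosSemidef) :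
    (1 + P).det ≤ (1 + P + G).det := by
  set A := 1 + P with hAdef
  have hA : A.PosDef := Matrix.PosDef.one.add_posSemidef hP
  set S := CFC.sqrt A with hSdef
  have hSh : S.IsHermitian := (CFC.sqrt_nonneg A).posSemidef.1
  have hSS : S * S = A := CFC.sqrt_mul_sqrt_self A hA.posSemidef.nonneg
  have hdet : S.det * S.det = A.det := by rw [← det_mul, hSS]
  have hdA : A.det ≠ 0 := ne_of_gt hA.det_pos
  have hdS : S.det ≠ 0 := fun h => hdA (by rw [← hdet, h, zero_mul])
  have hSu : IsUnit S.det := isUnit_iff_ne_zero.mpr hdS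
  have hSi : S⁻¹ * S = 1 := nonsing_inv_mul S hSu
  have hSi' : S * S⁻¹ = 1 := mul_nonsing_inv S hSu
  have hE : (S⁻¹ * G * S⁻¹).PosSemidef := by
    have := hG.conjTranspose_mul_mul_same S⁻¹
    rwa [hSh.inv] at this
  have key : A + G = S * (1 + S⁻¹ * G * S⁻¹) * S := by
    rw [Matrix.mul_add, Matrix.add_mul, Matrix.mul_one, hSS]
    congr 1
    rw [show S * (S⁻¹ * G * S⁻¹) * S = (S * S⁻¹) * G * (S⁻¹ * S) by
      simp only [Matrix.mul_assoc], hSi, hSi', Matrix.one_mul, Matrix.mul_one]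
  rw [show (1 : Matrix (Fin n) (Fin n) ℂ) + P + G = A + G by rw [hAdef], key,
    det_mul, det_mul, mul_right_comm, hdet]
  exact le_mul_of_one_le_right (le_of_lt hA.det_pos) (aux_one_le hE)

open scoped MatrixOrder in
lemma aux_subadd {N D : Matrix (Fin n) (Fin n) ℂ} (hN : N.PosSemidef) (hD : D.PosSemidef) :
    (1 + (N + D)).det ≤ (1 + N).det * (1 + D).det := by
  set A := 1 + N with hAdef
  have hA : A.PosDef := Matrix.PosDef.one.add_posSemidef hN
  set S := CFC.sqrt A with hSdef
  have hSh : S.IsHermitian := (CFC.sqrt_nonneg A).posSemidef.1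
  have hSS : S * S = A := CFC.sqrt_mul_sqrt_self A hA.posSemidef.nonneg
  have hdet : S.det * S.det = A.det := by rw [← det_mul, hSS]
  have hdA : A.det ≠ 0 := ne_of_gt hA.det_pos
  have hdS : S.det ≠ 0 := fun h => hdA (by rw [← hdet, h, zero_mul])
  have hSu : IsUnit S.det := isUnit_iff_ne_zero.mpr hdS
  have hSi : S⁻¹ * S = 1 := nonsing_inv_mul S hSu
  have hSi' : S * S⁻¹ = 1 := mul_nonsing_inv S hSu
  set T := CFC.sqrt D with hTdef
  have hTh : T.IsHermitian := (CFC.sqrt_nonneg D).posSemidef.1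
  have hTT : T * T = D := CFC.sqrt_mul_sqrt_self D hD.nonneg
  have hAinv : A⁻¹ = S⁻¹ * S⁻¹ := by rw [← hSS, Matrix.mul_inv_rev]
  -- 1 - A⁻¹ is PSD
  have hone_sub : (1 - A⁻¹ : Matrix (Fin n) (Fin n) ℂ) = S⁻¹ * N * S⁻¹ := by
    have hNA : N = A - 1 := by rw [hAdef]; abel
    rw [hNA, Matrix.mul_sub, Matrix.sub_mul, Matrix.mul_one, hAinv]
    congr 1
    rw [show S⁻¹ * A * S⁻¹ = S⁻¹ * (S * S) * S⁻¹ by rw [hSS],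
      show S⁻¹ * (S * S) * S⁻¹ = (S⁻¹ * S) * (S * S⁻¹) by simp only [Matrix.mul_assoc],
      hSi, hSi', Matrix.one_mul]
  have h1A : (1 - A⁻¹ : Matrix (Fin n) (Fin n) ℂ).PosSemidef := by
    rw [hone_sub]
    have := hN.conjTranspose_mul_mul_same S⁻¹
    rwa [hSh.inv] at this
  have hF : (T * A⁻¹ * T).PosSemidef := by
    have := (hA.posSemidef.inv).conjTranspose_mul_mul_same T
    rwa [hTh] at this
  have hG' : (T * (1 - A⁻¹) * T).PosSemidef := by
    have := h1A.conjTranspose_mul_mul_same T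
    rwa [hTh] at this
  have hFG : T * A⁻¹ * T + T * (1 - A⁻¹) * T = D := by
    rw [Matrix.mul_sub, Matrix.sub_mul, Matrix.mul_one]
    rw [hTT]; abel
  -- main factorization
  have key : 1 + (N + D) = S * (1 + S⁻¹ * D * S⁻¹) * S := by
    rw [Matrix.mul_add, Matrix.add_mul, Matrix.mul_one, hSS]
    have : S * (S⁻¹ * D * S⁻¹) * S = D := by
      rw [show S * (S⁻¹ * D * S⁻¹) * S = (S * S⁻¹) * D * (S⁻¹ * S) by
        simp only [Matrix.mul_assoc], hSi, hSi', Matrix.one_mul, Matrix.mul_one]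
    rw [this, hAdef]; abel
  have hmid : (1 + S⁻¹ * D * S⁻¹).det = (1 + T * A⁻¹ * T).det := by
    rw [show S⁻¹ * D * S⁻¹ = (S⁻¹ * T) * (T * S⁻¹) by
      rw [← hTT]; simp only [Matrix.mul_assoc],
      det_one_add_mul_comm,
      show (T * S⁻¹) * (S⁻¹ * T) = T * A⁻¹ * T by
        rw [hAinv]; simp only [Matrix.mul_assoc]]
  have hend : (1 + T * A⁻¹ * T).det ≤ (1 + D).det := by
    have := aux_mono hF hG'
    rwa [add_assoc, hFG] at this
  calc (1 + (N + D)).det = A.det * (1 + S⁻¹ * D * S⁻¹).det := by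
        rw [key, det_mul, det_mul, mul_right_comm, hdet]
    _ = A.det * (1 + T * A⁻¹ * T).det := by rw [hmid]
    _ ≤ A.det * (1 + D).det :=
        mul_le_mul_of_nonneg_left hend (le_of_lt hA.det_pos)


/-- For Hermitian PSD M, N with M - N PSD:
    0 ≤ log det(I+M) - log det(I+N) ≤ log det(I + M - N). -/
theorem stmt1 {n : ℕ} (M N : Matrix (Fin n) (Fin n) ℂ)
    (hM : M.PosSemidef) (hN : N.PosSemidef) (hMN : (M - N).PosSemidef) :
    0 ≤ Real.log (1 + M).det.re - Real.log (1 + N).det.re ∧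
      Real.log (1 + M).det.re - Real.log (1 + N).det.re ≤
        Real.log (1 + (M - N)).det.re := by
  have hMeq : (1 : Matrix (Fin n) (Fin n) ℂ) + M = 1 + (N + (M - N)) := by abel
  have c1 : (1 + N).det ≤ (1 + M).det := by
    rw [hMeq, show (1 : Matrix (Fin n) (Fin n) ℂ) + (N + (M - N)) = 1 + N + (M - N) by abel]
    exact aux_mono hN hMN
  have c2 : (1 + M).det ≤ (1 + N).det * (1 + (M - N)).det := by
    rw [hMeq]; exact aux_subadd hN hMN
  have pN := aux_pos hN
  have pM := aux_pos hM
  have pD := aux_pos hMN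
  rw [Complex.lt_def] at pN pM pD
  simp only [Complex.zero_re, Complex.zero_im] at pN pM pD
  rw [Complex.le_def] at c1 c2
  have hmulre : ((1 + N).det * (1 + (M - N)).det).re = (1 + N).det.re * (1 + (M - N)).det.re := by
    rw [Complex.mul_re, ← pN.2, ← pD.2]; ring
  constructor
  · have := Real.log_le_log pN.1 c1.1
    linarith
  · have h2 : (1 + M).det.re ≤ (1 + N).det.re * (1 + (M - N)).det.re := by
      rw [← hmulre]; exact c2.1
    have := Real.log_le_log pM.1 h2
    rw [Real.log_mul (ne_of_gt pN.1) (ne_of_gt pD.1)] at this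
    linarith
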